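/- Let {Xᵢ}_{i∈I} be a cofiltered system of topological spaces and X = lim Xᵢ its inverse limit. Then the Krull dimension of X is at most the supremum over i of the Krull dimensions of the Xᵢ. -/

import Mathlib

open TopologicalSpace Set

theorem stmt_6 {ι : Type*} [Preorder ι] [IsDirected ι (· ≤ ·)] [Nonempty ι]
    (X : ι → Type*) [∀ i, TopologicalSpace (X i)]
    (f : ∀ ⦃i j : ι⦄, i ≤ j → X j → X i)
    (hcont : ∀ ⦃i j : ι⦄ (h : i ≤ j), Continuous (f h))
    (hid : ∀ (i : ι) (x : X i), f (le_refl i) x = x)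
    (hcomp : ∀ ⦃i j k : ι⦄ (hij : i ≤ j) (hjk : j ≤ k) (x : X k),
      f hij (f hjk x) = f (hij.trans hjk) x) :
    topologicalKrullDim {u : ∀ j, X j // ∀ ⦃j k : ι⦄ (h : j ≤ k), f h (u k) = u j} ≤
      ⨆ i, topologicalKrullDim (X i) := by
  classical
  set Y := {u : ∀ j, X j // ∀ ⦃j k : ι⦄ (h : j ≤ k), f h (u k) = u j} with hY
  -- projections
  set π : ∀ i, Y → X i := fun i u => u.1 i with hπ
  have hπcont : ∀ i, Continuous (π i) := fun i =>
    (continuous_apply i).comp continuous_subtype_val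
  -- the candidate irreducible closed set in `X i`
  set C : ∀ i, Set Y → Set (X i) := fun i T => closure (π i '' T) with hC
  have hCmono : ∀ i (T T' : Set Y), T ⊆ T' → C i T ⊆ C i T' := fun i T T' h =>
    closure_mono (image_mono h)
  -- compatibility: C i T = closure (f h '' C j T) for i ≤ j
  have hCcomp : ∀ ⦃i j : ι⦄ (h : i ≤ j) (T : Set Y), C i T = closure (f h '' C j T) := by
    intro i j h T
    have h1 : π i '' T = f h '' (π j '' T) := by
      rw [← image_comp]
      refine image_congr fun y _ => ?_
      exact (y.2 h).symm
    rw [hC]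
    simp only
    rw [h1]
    exact (closure_image_closure (hcont h)).symm
  -- separation: closed T, x ∉ T gives an index and open set
  have hsep : ∀ (T : Set Y) (x : Y), IsClosed T → x ∉ T →
      ∃ (k : ι) (U : Set (X k)), IsOpen U ∧ π k x ∈ U ∧ ∀ y ∈ T, π k y ∉ U := by
    intro T x hT hx
    have hopen : IsOpen Tᶜ := hT.isOpen_compl
    rw [isOpen_induced_iff] at hopen
    obtain ⟨V, hV, hVT⟩ := hopen
    have hxV : x.1 ∈ V := by
      have : x ∈ Tᶜ := hx
      rw [← hVT] at this; exact this
    obtain ⟨I, u, hu, hpi⟩ := isOpen_pi_iff.mp hV x.1 hxV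
    obtain ⟨k, hk⟩ := I.exists_le
    refine ⟨k, ⋂ (j : I), f (hk j j.2) ⁻¹' u j, ?_, ?_, ?_⟩
    · exact isOpen_iInter_of_finite fun j => (hu j j.2).1.preimage (hcont _)
    · refine mem_iInter.mpr fun j => ?_
      simp only [mem_preimage]
      rw [x.2 (hk j j.2)]
      exact (hu j j.2).2
    · intro y hy hyU
      have : y.1 ∈ (I : Set ι).pi u := by
        intro j hj
        have := mem_iInter.mp hyU ⟨j, hj⟩
        rw [mem_preimage, y.2 (hk j hj)] at this
        exact this
      have : y ∈ Tᶜ := by rw [← hVT]; exact hpi this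
      exact this hy
  -- key strictness lemma
  have hstrict : ∀ (T T' : IrreducibleCloseds Y), T < T' →
      ∃ k : ι, C k (T : Set Y) ⊂ C k (T' : Set Y) := by
    intro T T' hlt
    have hsub : (T : Set Y) ⊆ T' := le_of_lt hlt
    obtain ⟨x, hxT', hxT⟩ : ∃ x, x ∈ (T' : Set Y) ∧ x ∉ (T : Set Y) := by
      by_contra hcon
      push_neg at hcon
      exact absurd (SetLike.coe_injective (subset_antisymm hsub hcon)) (ne_of_lt hlt)
    obtain ⟨k, U, hU, hxU, hdisj⟩ := hsep T x T.isClosed hxT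
    refine ⟨k, (hCmono k _ _ hsub).ssubset_of_ne fun heq => ?_⟩
    -- π k x ∈ C k T' but U is disjoint from C k T
    have h1 : π k x ∈ C k (T' : Set Y) := subset_closure (mem_image_of_mem _ hxT')
    have h2 : C k (T : Set Y) ⊆ Uᶜ := by
      refine closure_minimal ?_ (hU.isClosed_compl)
      rintro _ ⟨y, hy, rfl⟩
      exact hdisj y hy
    rw [← heq] at h1
    exact h2 h1 hxU
  -- strictness propagates upward
  have hup : ∀ ⦃i k : ι⦄ (h : i ≤ k) (T T' : Set Y),
      T ⊆ T' → C i T ⊂ C i T' → C k T ≠ C k T' := by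
    intro i k h T T' _ hlt heq
    rw [hCcomp h T, hCcomp h T', heq] at hlt
    exact (ne_of_lt hlt) rfl
  -- now the main argument
  rw [topologicalKrullDim, Order.krullDim]
  refine iSup_le fun p => ?_
  -- choose witnesses for each step
  have hwit : ∀ m : Fin p.length, ∃ k : ι,
      C k ((p m.castSucc : Set Y)) ⊂ C k ((p m.succ : Set Y)) :=
    fun m => hstrict _ _ (p.step m)
  choose w hw using hwit
  obtain ⟨k, hk⟩ := (Finset.univ.image w).exists_le
  have hk' : ∀ m, w m ≤ k := fun m => hk _ (Finset.mem_image_of_mem w (Finset.mem_univ m))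
  -- irreducibility of C k T
  have hirr : ∀ (T : IrreducibleCloseds Y), IsIrreducible (C k (T : Set Y)) :=
    fun T => (T.isIrreducible.image (π k) (hπcont k).continuousOn).closure
  set q : LTSeries (IrreducibleCloseds (X k)) :=
    ⟨p.length, fun m => ⟨C k ((p m : Set Y)), hirr _, isClosed_closure⟩, by
      intro m
      have hsub : ((p m.castSucc : Set Y)) ⊆ (p m.succ : Set Y) := le_of_lt (p.step m)
      have hne := hup (hk' m) _ _ hsub (hw m)
      exact lt_of_le_of_ne
        (SetLike.coe_subset_coe.mp (hCmono k _ _ hsub))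
        (fun heq => hne (congrArg (SetLike.coe : IrreducibleCloseds (X k) → Set (X k)) heq))⟩ with hq
  calc (p.length : WithBot ℕ∞) = (q.length : WithBot ℕ∞) := rfl
    _ ≤ topologicalKrullDim (X k) := Order.LTSeries.length_le_krullDim q
    _ ≤ ⨆ i, topologicalKrullDim (X i) := le_iSup (fun i => topologicalKrullDim (X i)) k
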